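/- Let d ≥ 2, let P, Q ⊆ Fin K be disjoint subsets with |P| = |Q| = d, and define f(w) = ∏_{k ∈ P} w_k + ∏_{k ∈ Q} w_k (operations in ZMod 2). Fix n ∈ P and n' ∈ Q and set S' = (P \ {n}) ∪ {n'}. Then the joint influence of S' on f equals 2 · (1/2^{d-1}) · (1 − 1/2^{d-1}); equivalently, card {w : Fin K → ZMod 2 | f(w + 𝟙_{S'}) ≠ f(w)} = 2^{K-d+2} − 2^{K-2d+3}. -/

import Mathlib

open Finset

/-- Indicator vector of a finite set of coordinates: `(𝟙_S)_k = 1` iff `k ∈ S`. -/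
def indVec {K : ℕ} (S : Finset (Fin K)) : Fin K → ZMod 2 :=
  fun k => if k ∈ S then 1 else 0

/-- Joint influence of the set `S` of coordinates on the Boolean function `f`:
the normalized count of inputs `w` for which flipping exactly the coordinates in `S`
changes the value of `f`. -/
def jointInf {K : ℕ} (S : Finset (Fin K)) (f : (Fin K → ZMod 2) → ZMod 2) : ℚ :=
  ((Finset.univ.filter fun w : Fin K → ZMod 2 => f (w + indVec S) ≠ f w).card : ℚ) / 2 ^ K

lemma zmod2_cases (x : ZMod 2) : x = 0 ∨ x = 1 := by revert x; decide

lemma Cyl_card {K : ℕ} (T : Finset (Fin K)) (v : Fin K → ZMod 2) :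
    (Finset.univ.filter fun w : Fin K → ZMod 2 => ∀ k ∈ T, w k = v k).card
      = 2 ^ (K - T.card) := by
  have h1 : (Finset.univ.filter fun w : Fin K → ZMod 2 => ∀ k ∈ T, w k = v k).card
      = (Finset.univ : Finset ({k : Fin K // k ∉ T} → ZMod 2)).card := by
    apply Finset.card_bij' (fun w _ => fun k => w k.1)
      (fun u _ => fun k => if h : k ∈ T then v k else u ⟨k, h⟩)
    · intro w hw
      funext k
      by_cases h : k ∈ T
      · simp only [mem_filter, mem_univ, true_and] at hw
        simp [h, hw k h]
      · simp [h]
    · intro u hu; funext k; simp [k.2]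
    · intro a ha; simp
    · intro u hu; simp only [mem_filter, mem_univ, true_and]; intro k hk; simp [hk]
  rw [h1, Finset.card_univ, Fintype.card_fun]
  have : Fintype.card {k : Fin K // k ∉ T} = K - T.card := by
    simp [Fintype.card_subtype_compl, Fintype.card_coe]
  rw [this]
  simp

lemma prod_one_iff {K : ℕ} (T : Finset (Fin K)) (g : Fin K → ZMod 2) :
    (∏ k ∈ T, g k) = 1 ↔ ∀ k ∈ T, g k = 1 := by
  constructor
  · intro h k hk
    by_contra hk1
    have h0 : g k = 0 := (zmod2_cases (g k)).resolve_right hk1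
    rw [Finset.prod_eq_zero hk h0] at h
    exact absurd h (by decide)
  · exact Finset.prod_eq_one

lemma key_iff (x y a b c : ZMod 2) (hab : a = 0 ∨ b = 0) :
    ((x * b + (y + 1) * c ≠ x * a + y * c) ↔
      ((x = 1 ∧ a = 1 ∧ ¬ c = 1) ∨ (x = 1 ∧ b = 1 ∧ ¬ c = 1) ∨
       (x = 1 ∧ ¬ a = 1 ∧ ¬ b = 1 ∧ c = 1) ∨ (x = 0 ∧ c = 1))) := by
  rcases zmod2_cases x with hx|hx <;> rcases zmod2_cases y with hy|hy <;>
    rcases zmod2_cases a with ha|ha <;> rcases zmod2_cases b with hb|hb <;>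
    rcases zmod2_cases c with hc|hc <;> subst hx hy ha hb hc <;>
    simp_all <;> decide

set_option maxHeartbeats 2000000 in
theorem stmt2 (K d : ℕ) (hd : 2 ≤ d)
    (P Q : Finset (Fin K)) (hPQ : Disjoint P Q) (hP : P.card = d) (hQ : Q.card = d)
    (f : (Fin K → ZMod 2) → ZMod 2)
    (hf : ∀ w, f w = (∏ k ∈ P, w k) + ∏ k ∈ Q, w k)
    (n n' : Fin K) (hn : n ∈ P) (hn' : n' ∈ Q) :
    jointInf ((P \ {n}) ∪ {n'}) f = 2 * (1 / 2 ^ (d - 1)) * (1 - 1 / 2 ^ (d - 1)) ∧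
    (Finset.univ.filter fun w : Fin K → ZMod 2 =>
        f (w + indVec ((P \ {n}) ∪ {n'})) ≠ f w).card
      = 2 ^ (K - d + 2) - 2 ^ (K - 2 * d + 3) := by
  classical
  set P' : Finset (Fin K) := P \ {n} with hP'def
  set Q' : Finset (Fin K) := Q \ {n'} with hQ'def
  set S' : Finset (Fin K) := P' ∪ {n'} with hS'def
  -- basic facts
  have hnQ : n ∉ Q := Finset.disjoint_left.mp hPQ hn
  have hn'P : n' ∉ P := Finset.disjoint_right.mp hPQ hn'
  have hnn' : n ≠ n' := fun h => hnQ (h ▸ hn')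
  have hnP' : n ∉ P' := by simp [hP'def]
  have hn'Q' : n' ∉ Q' := by simp [hQ'def]
  have hnQ' : n ∉ Q' := fun h => hnQ ((Finset.sdiff_subset) h)
  have hn'P' : n' ∉ P' := fun h => hn'P ((Finset.sdiff_subset) h)
  have hP'Q : Disjoint P' Q := hPQ.mono_left Finset.sdiff_subset
  have hP'Q' : Disjoint P' Q' := hP'Q.mono_right Finset.sdiff_subset
  have hPQ' : Disjoint P Q' := hPQ.mono_right Finset.sdiff_subset
  have hinsP : insert n P' = P := by
    rw [hP'def, ← Finset.erase_eq, Finset.insert_erase hn]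
  have hinsQ : insert n' Q' = Q := by
    rw [hQ'def, ← Finset.erase_eq, Finset.insert_erase hn']
  have hP'card : P'.card = d - 1 := by
    rw [hP'def, Finset.card_sdiff_of_subset (by simpa using hn), hP, Finset.card_singleton]
  have hQ'card : Q'.card = d - 1 := by
    rw [hQ'def, Finset.card_sdiff_of_subset (by simpa using hn'), hQ, Finset.card_singleton]
  obtain ⟨m0, hm0⟩ : P'.Nonempty := by
    rw [← Finset.card_pos, hP'card]; omega
  have hm0n : m0 ≠ n := fun h => hnP' (h ▸ hm0)
  have hm0P : m0 ∈ P := Finset.sdiff_subset hm0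
  -- K ≥ 2d
  have hK : 2 * d ≤ K := by
    have h1 : (P ∪ Q).card = 2 * d := by
      rw [Finset.card_union_of_disjoint hPQ, hP, hQ]; ring
    have h2 : (P ∪ Q).card ≤ K := by
      simpa using Finset.card_le_univ (P ∪ Q)
    omega
  obtain ⟨m, hm⟩ : ∃ m, K = 2 * d + m := ⟨K - 2 * d, by omega⟩
  obtain ⟨e, he⟩ : ∃ e, d = e + 2 := ⟨d - 2, by omega⟩
  have harith1 : K - d + 2 = e + m + 4 := by omega
  have harith2 : K - 2 * d + 3 = m + 3 := by omega
  have harith3 : d - 1 = e + 1 := by omega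
  have harith4 : K = 2 * e + m + 4 := by omega
  have harith5 : K - 2 * d + 3 = (K - (2 * d - 1)) + 2 := by omega
  have harith6 : m + 3 ≤ e + m + 4 := by omega
  -- indicator values
  have hsn : indVec S' n = 0 := by
    simp [indVec, hS'def, hnP', hnn']
  have hsn' : indVec S' n' = 1 := by
    simp [indVec, hS'def]
  have hsP' : ∀ k ∈ P', indVec S' k = 1 := by
    intro k hk; simp [indVec, hS'def, hk]
  have hsQ' : ∀ k ∈ Q', indVec S' k = 0 := by
    intro k hk
    have h1 : k ∉ P' := Finset.disjoint_right.mp hP'Q' hk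
    have h2 : k ≠ n' := fun h => hn'Q' (h ▸ hk)
    simp [indVec, hS'def, h1, h2]
  -- the value patterns
  set vB : Fin K → ZMod 2 := fun k => if k = n then 1 else 0 with hvB
  set v0 : Fin K → ZMod 2 := fun k => if k = n then 0 else 1 with hv0
  set v2 : Fin K → ZMod 2 := fun k => if k ∈ P' then 0 else 1 with hv2
  set D1 : (Fin K → ZMod 2) → Prop :=
    fun w => (∀ k ∈ P, w k = 1) ∧ ¬ (∀ k ∈ Q', w k = 1) with hD1
  set D2 : (Fin K → ZMod 2) → Prop :=
    fun w => (∀ k ∈ P, w k = vB k) ∧ ¬ (∀ k ∈ Q', w k = 1) with hD2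
  set D3 : (Fin K → ZMod 2) → Prop :=
    fun w => (∀ k ∈ insert n Q', w k = 1) ∧ ¬ (∀ k ∈ P', w k = 1) ∧
      ¬ (∀ k ∈ P', w k = 0) with hD3
  set D4 : (Fin K → ZMod 2) → Prop :=
    fun w => (∀ k ∈ insert n Q', w k = v0 k) with hD4
  -- pointwise characterization
  have hpoint : ∀ w : Fin K → ZMod 2,
      (f (w + indVec S') ≠ f w) ↔ (D1 w ∨ D2 w ∨ D3 w ∨ D4 w) := by
    intro w
    have hprodP1 : (∏ k ∈ P, (w + indVec S') k)
        = w n * ∏ k ∈ P', (w k + 1) := by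
      rw [← hinsP, Finset.prod_insert hnP']
      congr 1
      · simp [hsn]
      · exact Finset.prod_congr rfl fun k hk => by simp [hsP' k hk]
    have hprodP2 : (∏ k ∈ P, w k) = w n * ∏ k ∈ P', w k := by
      rw [← hinsP, Finset.prod_insert hnP']
    have hprodQ1 : (∏ k ∈ Q, (w + indVec S') k)
        = (w n' + 1) * ∏ k ∈ Q', w k := by
      rw [← hinsQ, Finset.prod_insert hn'Q']
      congr 1
      · simp [hsn']
      · exact Finset.prod_congr rfl fun k hk => by simp [hsQ' k hk]
    have hprodQ2 : (∏ k ∈ Q, w k) = w n' * ∏ k ∈ Q', w k := by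
      rw [← hinsQ, Finset.prod_insert hn'Q']
    set a : ZMod 2 := ∏ k ∈ P', w k with ha
    set b : ZMod 2 := ∏ k ∈ P', (w k + 1) with hb
    set c : ZMod 2 := ∏ k ∈ Q', w k with hc
    have hab : a = 0 ∨ b = 0 := by
      rcases zmod2_cases (w m0) with h|h
      · exact Or.inl (ha ▸ Finset.prod_eq_zero hm0 h)
      · refine Or.inr (hb ▸ Finset.prod_eq_zero hm0 ?_)
        rw [h]; decide
    have hcond : (f (w + indVec S') ≠ f w) ↔
        (w n * b + (w n' + 1) * c ≠ w n * a + w n' * c) := by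
      rw [hf, hf, hprodP1, hprodP2, hprodQ1, hprodQ2]
    rw [hcond, key_iff _ _ _ _ _ hab]
    -- translate atoms
    have hA : a = 1 ↔ ∀ k ∈ P', w k = 1 := prod_one_iff P' w
    have hB : b = 1 ↔ ∀ k ∈ P', w k = 0 := by
      rw [hb, prod_one_iff]
      constructor
      · intro h k hk
        have := h k hk
        rcases zmod2_cases (w k) with h'|h'
        · exact h'
        · rw [h'] at this; exact absurd this (by decide)
      · intro h k hk; rw [h k hk]; decide
    have hC : c = 1 ↔ ∀ k ∈ Q', w k = 1 := prod_one_iff Q' w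
    have hPvB : (∀ k ∈ P', w k = vB k) ↔ (∀ k ∈ P', w k = 0) := by
      constructor
      · intro h k hk
        have hkn : k ≠ n := fun h' => hnP' (h' ▸ hk)
        have := h k hk
        simp only [hvB, if_neg hkn] at this
        exact this
      · intro h k hk
        have hkn : k ≠ n := fun h' => hnP' (h' ▸ hk)
        rw [hvB]
        simp only [if_neg hkn]
        exact h k hk
    have hQv0 : (∀ k ∈ Q', w k = v0 k) ↔ (∀ k ∈ Q', w k = 1) := by
      constructor
      · intro h k hk
        have hkn : k ≠ n := fun h' => hnQ' (h' ▸ hk)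
        have := h k hk
        simp only [hv0, if_neg hkn] at this
        exact this
      · intro h k hk
        have hkn : k ≠ n := fun h' => hnQ' (h' ▸ hk)
        rw [hv0]
        simp only [if_neg hkn]
        exact h k hk
    have hvBn : vB n = 1 := by simp [hvB]
    have hv0n : v0 n = 0 := by simp [hv0]
    have e1 : (w n = 1 ∧ a = 1 ∧ ¬ c = 1) ↔ D1 w := by
      simp only [hD1, ← hinsP, Finset.forall_mem_insert, hA, hC]
      exact ⟨fun ⟨h1, h2, h3⟩ => ⟨⟨h1, h2⟩, h3⟩, fun ⟨⟨h1, h2⟩, h3⟩ => ⟨h1, h2, h3⟩⟩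
    have e2 : (w n = 1 ∧ b = 1 ∧ ¬ c = 1) ↔ D2 w := by
      simp only [hD2, ← hinsP, Finset.forall_mem_insert, hB, hC, hPvB, hvBn]
      exact ⟨fun ⟨h1, h2, h3⟩ => ⟨⟨h1, h2⟩, h3⟩, fun ⟨⟨h1, h2⟩, h3⟩ => ⟨h1, h2, h3⟩⟩
    have e3 : (w n = 1 ∧ ¬ a = 1 ∧ ¬ b = 1 ∧ c = 1) ↔ D3 w := by
      simp only [hD3, Finset.forall_mem_insert, hA, hB, hC]
      exact ⟨fun ⟨h1, h2, h3, h4⟩ => ⟨⟨h1, h4⟩, h2, h3⟩,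
             fun ⟨⟨h1, h4⟩, h2, h3⟩ => ⟨h1, h2, h3, h4⟩⟩
    have e4 : (w n = 0 ∧ c = 1) ↔ D4 w := by
      simp only [hD4, Finset.forall_mem_insert, hQv0, hC, hv0n]
    exact or_congr e1 (or_congr e2 (or_congr e3 e4))
  -- split the filter
  have hsplit : (Finset.univ.filter fun w : Fin K → ZMod 2 =>
      f (w + indVec S') ≠ f w)
      = ((Finset.univ.filter D1 ∪ Finset.univ.filter D2) ∪ Finset.univ.filter D3)
        ∪ Finset.univ.filter D4 := by
    rw [Finset.filter_congr fun w _ => hpoint w]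
    rw [Finset.filter_or, Finset.filter_or, Finset.filter_or]
    ac_rfl
  -- abbreviations
  set A : ℕ := 2 ^ (K - d) with hA'
  set B : ℕ := 2 ^ (K - (2 * d - 1)) with hB'
  have hunionCard : (P ∪ Q').card = 2 * d - 1 := by
    rw [Finset.card_union_of_disjoint hPQ', hP, hQ'card]; omega
  have hT1card : (insert n Q').card = d := by
    rw [Finset.card_insert_of_notMem hnQ', hQ'card]; omega
  have hT1P' : Disjoint (insert n Q') P' := by
    rw [Finset.disjoint_left]
    intro k hk
    rcases Finset.mem_insert.mp hk with h|h
    · exact h ▸ hnP'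
    · exact fun hk' => Finset.disjoint_right.mp hP'Q' h hk'
  have hT1unionCard : (insert n Q' ∪ P').card = 2 * d - 1 := by
    rw [Finset.card_union_of_disjoint hT1P', hT1card, hP'card]; omega
  -- cylinder cards
  have cardP1 : (Finset.univ.filter fun w : Fin K → ZMod 2 =>
      ∀ k ∈ P, w k = 1).card = A := by
    have h := Cyl_card P (fun _ => (1 : ZMod 2))
    rw [hP] at h
    exact h
  have cardPB : (Finset.univ.filter fun w : Fin K → ZMod 2 =>
      ∀ k ∈ P, w k = vB k).card = A := by
    have h := Cyl_card P vB
    rw [hP] at h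
    exact h
  have cardT1 : (Finset.univ.filter fun w : Fin K → ZMod 2 =>
      ∀ k ∈ insert n Q', w k = 1).card = A := by
    have h := Cyl_card (insert n Q') (fun _ => (1 : ZMod 2))
    rw [hT1card] at h
    exact h
  have cardPQ'1 : (Finset.univ.filter fun w : Fin K → ZMod 2 =>
      ∀ k ∈ P ∪ Q', w k = 1).card = B := by
    have h := Cyl_card (P ∪ Q') (fun _ => (1 : ZMod 2))
    rw [hunionCard] at h
    exact h
  have cardPQ'2 : (Finset.univ.filter fun w : Fin K → ZMod 2 =>
      ∀ k ∈ P ∪ Q', w k = v2 k).card = B := by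
    have h := Cyl_card (P ∪ Q') v2
    rw [hunionCard] at h
    exact h
  have cardU1 : (Finset.univ.filter fun w : Fin K → ZMod 2 =>
      ∀ k ∈ insert n Q' ∪ P', w k = 1).card = B := by
    have h := Cyl_card (insert n Q' ∪ P') (fun _ => (1 : ZMod 2))
    rw [hT1unionCard] at h
    exact h
  have cardU2 : (Finset.univ.filter fun w : Fin K → ZMod 2 =>
      ∀ k ∈ insert n Q' ∪ P', w k = v2 k).card = B := by
    have h := Cyl_card (insert n Q' ∪ P') v2
    rw [hT1unionCard] at h
    exact h
  -- value agreement facts for v2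
  have hv2P : ∀ k ∈ P, vB k = v2 k := by
    intro k hk
    by_cases hkn : k = n
    · subst hkn
      rw [hvB, hv2]
      simp [hnP']
    · have hkP' : k ∈ P' := by rw [hP'def]; simp [hk, hkn]
      rw [hvB, hv2]
      simp [hkn, hkP']
  have hv2Q' : ∀ k ∈ Q', (1 : ZMod 2) = v2 k := by
    intro k hk
    have : k ∉ P' := Finset.disjoint_right.mp hP'Q' hk
    rw [hv2]; simp [this]
  have hv2T1 : ∀ k ∈ insert n Q', (1 : ZMod 2) = v2 k := by
    intro k hk
    rcases Finset.mem_insert.mp hk with h|h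
    · subst h; rw [hv2]; simp [hnP']
    · exact hv2Q' k h
  have hv2P' : ∀ k ∈ P', (0 : ZMod 2) = v2 k := by
    intro k hk
    rw [hv2]; simp [hk]
  -- E1
  have E1 : (Finset.univ.filter D1).card + B = A := by
    have key1 := Finset.card_filter_add_card_filter_not
      (s := Finset.univ.filter fun w : Fin K → ZMod 2 => ∀ k ∈ P, w k = 1)
      (p := fun w => ∀ k ∈ Q', w k = 1)
    rw [Finset.filter_filter, Finset.filter_filter, cardP1] at key1
    have hsub : (Finset.univ.filter fun w : Fin K → ZMod 2 =>
        (∀ k ∈ P, w k = 1) ∧ (∀ k ∈ Q', w k = 1))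
        = Finset.univ.filter fun w => ∀ k ∈ P ∪ Q', w k = 1 := by
      apply Finset.filter_congr
      intro w _
      rw [Finset.forall_mem_union]
    rw [hsub, cardPQ'1] at key1
    have hD1eq : (Finset.univ.filter D1)
        = Finset.univ.filter fun w : Fin K → ZMod 2 =>
          (∀ k ∈ P, w k = 1) ∧ ¬ (∀ k ∈ Q', w k = 1) := by
      apply Finset.filter_congr
      intro w _
      simp only [hD1]
    rw [hD1eq]
    linarith [key1]
  -- E2
  have E2 : (Finset.univ.filter D2).card + B = A := by
    have key2 := Finset.card_filter_add_card_filter_not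
      (s := Finset.univ.filter fun w : Fin K → ZMod 2 => ∀ k ∈ P, w k = vB k)
      (p := fun w => ∀ k ∈ Q', w k = 1)
    rw [Finset.filter_filter, Finset.filter_filter, cardPB] at key2
    have hsub : (Finset.univ.filter fun w : Fin K → ZMod 2 =>
        (∀ k ∈ P, w k = vB k) ∧ (∀ k ∈ Q', w k = 1))
        = Finset.univ.filter fun w => ∀ k ∈ P ∪ Q', w k = v2 k := by
      apply Finset.filter_congr
      intro w _
      rw [Finset.forall_mem_union]
      constructor
      · rintro ⟨h1, h2⟩
        exact ⟨fun k hk => (h1 k hk).trans (hv2P k hk),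
               fun k hk => (h2 k hk).trans (hv2Q' k hk)⟩
      · rintro ⟨h1, h2⟩
        exact ⟨fun k hk => (h1 k hk).trans (hv2P k hk).symm,
               fun k hk => (h2 k hk).trans (hv2Q' k hk).symm⟩
    rw [hsub, cardPQ'2] at key2
    have hD2eq : (Finset.univ.filter D2)
        = Finset.univ.filter fun w : Fin K → ZMod 2 =>
          (∀ k ∈ P, w k = vB k) ∧ ¬ (∀ k ∈ Q', w k = 1) := by
      apply Finset.filter_congr
      intro w _
      simp only [hD2]
    rw [hD2eq]
    linarith [key2]
  -- E3
  have E3 : (Finset.univ.filter D3).card + B + B = A := by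
    have key3a := Finset.card_filter_add_card_filter_not
      (s := Finset.univ.filter fun w : Fin K → ZMod 2 => ∀ k ∈ insert n Q', w k = 1)
      (p := fun w => ∀ k ∈ P', w k = 1)
    rw [Finset.filter_filter, Finset.filter_filter, cardT1] at key3a
    have hsub1 : (Finset.univ.filter fun w : Fin K → ZMod 2 =>
        (∀ k ∈ insert n Q', w k = 1) ∧ (∀ k ∈ P', w k = 1))
        = Finset.univ.filter fun w => ∀ k ∈ insert n Q' ∪ P', w k = 1 := by
      apply Finset.filter_congr
      intro w _
      rw [Finset.forall_mem_union]
    rw [hsub1, cardU1] at key3a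
    have key3b := Finset.card_filter_add_card_filter_not
      (s := Finset.univ.filter fun w : Fin K → ZMod 2 =>
        (∀ k ∈ insert n Q', w k = 1) ∧ ¬ (∀ k ∈ P', w k = 1))
      (p := fun w => ∀ k ∈ P', w k = 0)
    rw [Finset.filter_filter, Finset.filter_filter] at key3b
    have hsub2 : (Finset.univ.filter fun w : Fin K → ZMod 2 =>
        ((∀ k ∈ insert n Q', w k = 1) ∧ ¬ (∀ k ∈ P', w k = 1)) ∧ (∀ k ∈ P', w k = 0))
        = Finset.univ.filter fun w => ∀ k ∈ insert n Q' ∪ P', w k = v2 k := by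
      apply Finset.filter_congr
      intro w _
      rw [Finset.forall_mem_union]
      constructor
      · rintro ⟨⟨h1, _⟩, h2⟩
        exact ⟨fun k hk => (h1 k hk).trans (hv2T1 k hk),
               fun k hk => (h2 k hk).trans (hv2P' k hk)⟩
      · rintro ⟨h1, h2⟩
        have hz : ∀ k ∈ P', w k = 0 := fun k hk => (h2 k hk).trans (hv2P' k hk).symm
        refine ⟨⟨fun k hk => (h1 k hk).trans (hv2T1 k hk).symm, ?_⟩, hz⟩
        intro hall
        have h1' := hall m0 hm0
        have h0' := hz m0 hm0
        rw [h1'] at h0'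
        exact absurd h0' (by decide)
    rw [hsub2, cardU2] at key3b
    have hD3eq : (Finset.univ.filter D3)
        = Finset.univ.filter fun w : Fin K → ZMod 2 =>
          ((∀ k ∈ insert n Q', w k = 1) ∧ ¬ (∀ k ∈ P', w k = 1)) ∧
            ¬ (∀ k ∈ P', w k = 0) := by
      apply Finset.filter_congr
      intro w _
      simp only [hD3]
      exact ⟨fun ⟨h1, h2, h3⟩ => ⟨⟨h1, h2⟩, h3⟩, fun ⟨⟨h1, h2⟩, h3⟩ => ⟨h1, h2, h3⟩⟩
    rw [hD3eq]
    linarith [key3a, key3b]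
  -- E4
  have E4 : (Finset.univ.filter D4).card = A := by
    have hD4eq : (Finset.univ.filter D4)
        = Finset.univ.filter fun w : Fin K → ZMod 2 =>
          ∀ k ∈ insert n Q', w k = v0 k := by
      apply Finset.filter_congr
      intro w _
      simp only [hD4]
    rw [hD4eq]
    have h := Cyl_card (insert n Q') v0
    rw [hT1card] at h
    exact h
  -- disjointness
  have d12 : Disjoint (Finset.univ.filter D1) (Finset.univ.filter D2) := by
    rw [Finset.disjoint_left]
    intro w h1 h2
    simp only [Finset.mem_filter, Finset.mem_univ, true_and, hD1, hD2] at h1 h2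
    have ha1 := h1.1 m0 hm0P
    have ha2 := h2.1 m0 hm0P
    rw [ha1] at ha2
    simp only [hvB, if_neg hm0n] at ha2
    exact absurd ha2 (by decide)
  have d13 : Disjoint (Finset.univ.filter D1) (Finset.univ.filter D3) := by
    rw [Finset.disjoint_left]
    intro w h1 h3
    simp only [Finset.mem_filter, Finset.mem_univ, true_and, hD1, hD3] at h1 h3
    exact h1.2 fun k hk => h3.1 k (Finset.mem_insert_of_mem hk)
  have d23 : Disjoint (Finset.univ.filter D2) (Finset.univ.filter D3) := by
    rw [Finset.disjoint_left]
    intro w h2 h3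
    simp only [Finset.mem_filter, Finset.mem_univ, true_and, hD2, hD3] at h2 h3
    exact h2.2 fun k hk => h3.1 k (Finset.mem_insert_of_mem hk)
  have d14 : Disjoint (Finset.univ.filter D1) (Finset.univ.filter D4) := by
    rw [Finset.disjoint_left]
    intro w h1 h4
    simp only [Finset.mem_filter, Finset.mem_univ, true_and, hD1, hD4] at h1 h4
    have ha1 := h1.1 n hn
    have ha4 := h4 n (Finset.mem_insert_self n Q')
    rw [ha1] at ha4
    simp only [hv0, if_pos] at ha4
    exact absurd ha4 (by decide)
  have d24 : Disjoint (Finset.univ.filter D2) (Finset.univ.filter D4) := by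
    rw [Finset.disjoint_left]
    intro w h2 h4
    simp only [Finset.mem_filter, Finset.mem_univ, true_and, hD2, hD4] at h2 h4
    have ha2 := h2.1 n hn
    have ha4 := h4 n (Finset.mem_insert_self n Q')
    simp only [hvB, if_pos] at ha2
    rw [ha2] at ha4
    simp only [hv0, if_pos] at ha4
    exact absurd ha4 (by decide)
  have d34 : Disjoint (Finset.univ.filter D3) (Finset.univ.filter D4) := by
    rw [Finset.disjoint_left]
    intro w h3 h4
    simp only [Finset.mem_filter, Finset.mem_univ, true_and, hD3, hD4] at h3 h4
    have ha3 := h3.1 n (Finset.mem_insert_self n Q')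
    have ha4 := h4 n (Finset.mem_insert_self n Q')
    rw [ha3] at ha4
    simp only [hv0, if_pos] at ha4
    exact absurd ha4 (by decide)
  -- the count
  have hcard : (Finset.univ.filter fun w : Fin K → ZMod 2 =>
      f (w + indVec S') ≠ f w).card = 2 ^ (K - d + 2) - 2 ^ (K - 2 * d + 3) := by
    rw [hsplit,
      Finset.card_union_of_disjoint (by
        exact Finset.disjoint_union_left.mpr
          ⟨Finset.disjoint_union_left.mpr ⟨d14, d24⟩, d34⟩),
      Finset.card_union_of_disjoint (Finset.disjoint_union_left.mpr ⟨d13, d23⟩),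
      Finset.card_union_of_disjoint d12]
    have hX : 2 ^ (K - d + 2) = 4 * A := by
      rw [hA', pow_add]; ring
    have hY : 2 ^ (K - 2 * d + 3) = 4 * B := by
      rw [hB', harith5, pow_add]; ring
    rw [hX, hY]
    apply Nat.eq_sub_of_add_eq
    linarith [E1, E2, E3, E4]
  refine ⟨?_, hcard⟩
  -- the joint influence
  simp only [jointInf]
  rw [hcard]
  rw [harith1, harith2, harith3]
  rw [Nat.cast_sub (Nat.pow_le_pow_right (by norm_num) harith6)]
  push_cast
  rw [harith4]
  have h2 : ((2 : ℚ) ^ (e + 1)) ≠ 0 := by positivity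
  have h3 : ((2 : ℚ) ^ (2 * e + m + 4)) ≠ 0 := by positivity
  field_simp
  ring
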